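/- Assume in addition that b_{n+1}d_{n+2} − d_{n+1}b_{n+2} ≠ 0 on U, and define R̂ = (−1/(b_{n+1}d_{n+2} − d_{n+1}b_{n+2})) · (b_{n+1}, d_{n+1})ᵀ · (−d_{n+2}, b_{n+2}). Then for each i = 1, …, n, the partial derivative of R̂ with respect to t_i equals R̂ A_i (R̂ − I)/(t_i − 1) − (R̂ − I) A_i R̂ / t_i, where I is the 2×2 identity matrix. -/

import Mathlib

open Finset

noncomputable section

/-- Extend `t = (t₁, …, tₙ) : Fin n → ℂ` by the fixed points `t_{n+1} = 0` and
`t_{n+2} = 1` (0-based: indices `n` and `n+1` of `Fin (n+2)`). -/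
def ext (n : ℕ) (t : Fin n → ℂ) (j : Fin (n + 2)) : ℂ :=
  if h : (j : ℕ) < n then t ⟨j, h⟩ else if (j : ℕ) = n then 0 else 1

/-- Inclusion of indices `1, …, n` into `1, …, n+2` (0-based). -/
def inc (n : ℕ) : Fin n → Fin (n + 2) := Fin.castLE (by omega)

/-- The partial derivative `∂f/∂t_i` of a scalar function on `ℂⁿ`. -/
def pderiv (n : ℕ) (i : Fin n) (f : (Fin n → ℂ) → ℂ) (t : Fin n → ℂ) : ℂ :=
  fderiv ℂ f t (Pi.single i 1)

/-- `ρ = −(θ₁ + ⋯ + θ_{n+3})/2`. -/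
def rho (n : ℕ) (θ : Fin (n + 3) → ℂ) : ℂ := -(∑ j, θ j) / 2

/-- The constants `C_{ij} = −θ_iθ_j/2 + (θ_i² + θ_j²)/(2(n+1))
− (Σ_k θ_k²)/(2(n+1)(n+2))`. -/
def Cc (n : ℕ) (θ : Fin (n + 3) → ℂ) (i j : Fin (n + 2)) : ℂ :=
  -(θ (Fin.castSucc i) * θ (Fin.castSucc j)) / 2
    + (θ (Fin.castSucc i) ^ 2 + θ (Fin.castSucc j) ^ 2) / (2 * ((n : ℂ) + 1))
    - (∑ k, θ k ^ 2) / (2 * ((n : ℂ) + 1) * ((n : ℂ) + 2))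

/-- `H̃_i = Σ_{1 ≤ j ≤ n+2, j ≠ i} tr(A_i A_j)/(t_i − t_j)`. -/
def Htil (n : ℕ) (A : Fin (n + 2) → (Fin n → ℂ) → Matrix (Fin 2) (Fin 2) ℂ)
    (i : Fin n) (t : Fin n → ℂ) : ℂ :=
  ∑ j ∈ Finset.univ.filter (fun j => j ≠ inc n i),
    (A (inc n i) t * A j t).trace / (t i - ext n t j)

/-- `R̂ = (−1/(b_{n+1}d_{n+2} − d_{n+1}b_{n+2})) · (b_{n+1}, d_{n+1})ᵀ · (−d_{n+2}, b_{n+2})`,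
where `b_j = (A_j)₁₂` and `d_j = (A_j)₂₂`. -/
def Rhat (n : ℕ) (A : Fin (n + 2) → (Fin n → ℂ) → Matrix (Fin 2) (Fin 2) ℂ)
    (s : Fin n → ℂ) : Matrix (Fin 2) (Fin 2) ℂ :=
  (-(A ⟨n, by omega⟩ s 0 1 * A ⟨n + 1, by omega⟩ s 1 1
      - A ⟨n, by omega⟩ s 1 1 * A ⟨n + 1, by omega⟩ s 0 1)⁻¹) •
    Matrix.vecMulVec ![A ⟨n, by omega⟩ s 0 1, A ⟨n, by omega⟩ s 1 1]
      ![-(A ⟨n + 1, by omega⟩ s 1 1), A ⟨n + 1, by omega⟩ s 0 1]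


lemma pderiv_neg' {n : ℕ} (i : Fin n) (f : (Fin n → ℂ) → ℂ) (t : Fin n → ℂ) :
    pderiv n i (fun s => -(f s)) t = -(pderiv n i f t) := by
  unfold pderiv; rw [fderiv_fun_neg]; simp

lemma pderiv_master {n : ℕ} (i : Fin n) (t : Fin n → ℂ)
    (f1 f2 f3 f4 u w : (Fin n → ℂ) → ℂ)
    (h1 : DifferentiableAt ℂ f1 t) (h2 : DifferentiableAt ℂ f2 t)
    (h3 : DifferentiableAt ℂ f3 t) (h4 : DifferentiableAt ℂ f4 t)
    (hu : DifferentiableAt ℂ u t) (hw : DifferentiableAt ℂ w t)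
    (hD : f1 t * f4 t - f2 t * f3 t ≠ 0) :
    pderiv n i (fun s => -(f1 s * f4 s - f2 s * f3 s)⁻¹ * (u s * w s)) t
      = ((f1 t * f4 t - f2 t * f3 t) ^ 2)⁻¹
          * (f1 t * pderiv n i f4 t + f4 t * pderiv n i f1 t
              - (f2 t * pderiv n i f3 t + f3 t * pderiv n i f2 t))
          * (u t * w t)
        - (f1 t * f4 t - f2 t * f3 t)⁻¹
          * (u t * pderiv n i w t + w t * pderiv n i u t) := by
  unfold pderiv
  have hg := (h1.hasFDerivAt.mul h4.hasFDerivAt).sub (h2.hasFDerivAt.mul h3.hasFDerivAt)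
  have hinv := (hasDerivAt_inv hD).comp_hasFDerivAt t hg
  have hF := hinv.neg.mul (hu.hasFDerivAt.mul hw.hasFDerivAt)
  simp only [Function.comp_def] at hF
  rw [show (fun s => -(f1 s * f4 s - f2 s * f3 s)⁻¹ * (u s * w s)) = ((-fun x => ((f1 * f4 - f2 * f3) x)⁻¹) * (u * w)) from rfl, hF.fderiv]
  simp only [ContinuousLinearMap.add_apply, ContinuousLinearMap.smul_apply,
    ContinuousLinearMap.neg_apply, ContinuousLinearMap.sub_apply, smul_eq_mul,
    Pi.neg_apply, Pi.mul_apply, Pi.sub_apply]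
  ring

set_option maxHeartbeats 2000000 in
/-- If moreover `b_{n+1}d_{n+2} − d_{n+1}b_{n+2} ≠ 0` on `U`, then
`∂R̂/∂t_i = R̂ A_i (R̂ − I)/(t_i − 1) − (R̂ − I) A_i R̂ / t_i` for `i = 1, …, n`. -/
theorem pderiv_Rhat
    (n : ℕ) (hn : 2 ≤ n) (θ : Fin (n + 3) → ℂ)
    (U : Set (Fin n → ℂ)) (hU : IsOpen U)
    (A : Fin (n + 2) → (Fin n → ℂ) → Matrix (Fin 2) (Fin 2) ℂ)
    (hdist : ∀ t ∈ U, ∀ j k : Fin (n + 2), j ≠ k → ext n t j ≠ ext n t k)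
    (hHol : ∀ (j : Fin (n + 2)) (k l : Fin 2),
      DifferentiableOn ℂ (fun s => A j s k l) U)
    (hdet : ∀ t ∈ U, ∀ j, (A j t).det = 0)
    (htr : ∀ t ∈ U, ∀ j : Fin (n + 2), (A j t).trace = θ (Fin.castSucc j))
    (hsum : ∀ t ∈ U, ∑ j, A j t =
      -Matrix.diagonal ![rho n θ, rho n θ + θ (Fin.last (n + 2))])
    (hSch1 : ∀ t ∈ U, ∀ (i : Fin n) (j : Fin (n + 2)), j ≠ inc n i →
      ∀ (k l : Fin 2),
        pderiv n i (fun s => A j s k l) t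
          = ((t i - ext n t j)⁻¹ •
              (A (inc n i) t * A j t - A j t * A (inc n i) t)) k l)
    (hSch2 : ∀ t ∈ U, ∀ (i : Fin n) (k l : Fin 2),
      pderiv n i (fun s => A (inc n i) s k l) t
        = ∑ j ∈ Finset.univ.filter (fun j => j ≠ inc n i),
            ((t i - ext n t j)⁻¹ •
              (A j t * A (inc n i) t - A (inc n i) t * A j t)) k l)
    (hden : ∀ t ∈ U,
      A ⟨n, by omega⟩ t 0 1 * A ⟨n + 1, by omega⟩ t 1 1
        - A ⟨n, by omega⟩ t 1 1 * A ⟨n + 1, by omega⟩ t 0 1 ≠ 0) :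
    ∀ t ∈ U, ∀ (i : Fin n) (k l : Fin 2),
      pderiv n i (fun s => Rhat n A s k l) t
        = ((t i - 1)⁻¹ • (Rhat n A t * A (inc n i) t * (Rhat n A t - 1))
            - (t i)⁻¹ • ((Rhat n A t - 1) * A (inc n i) t * Rhat n A t)) k l := by
  
  intro t ht i k l
  have hjP : (⟨n, by omega⟩ : Fin (n+2)) ≠ inc n i := by
    simp only [inc, ne_eq, Fin.ext_iff, Fin.coe_castLE]; omega
  have hjQ : (⟨n + 1, by omega⟩ : Fin (n+2)) ≠ inc n i := by
    simp only [inc, ne_eq, Fin.ext_iff, Fin.coe_castLE]; omega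
  have extP : _root_.ext n t ⟨n, by omega⟩ = 0 := by simp [_root_.ext]
  have extQ : _root_.ext n t ⟨n + 1, by omega⟩ = 1 := by
    rw [_root_.ext, dif_neg (by simp), if_neg (by simp)]
  have extI : _root_.ext n t (inc n i) = t i := by
    simp [_root_.ext, inc, Fin.is_lt]
  have hti0 : t i ≠ 0 := by
    have := hdist t ht (inc n i) ⟨n, by omega⟩
      (by simp only [ne_eq, Fin.ext_iff, Fin.coe_castLE, inc]; omega)
    rwa [extI, extP] at this
  have hti1 : t i - 1 ≠ 0 := by
    have := hdist t ht (inc n i) ⟨n + 1, by omega⟩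
      (by simp only [ne_eq, Fin.ext_iff, Fin.coe_castLE, inc]; omega)
    rw [extI, extQ] at this
    exact sub_ne_zero.mpr this
  have hD := hden t ht
  have hd : ∀ (j : Fin (n+2)) (k l : Fin 2),
      DifferentiableAt ℂ (fun s => A j s k l) t :=
    fun j k l => (hHol j k l).differentiableAt (hU.mem_nhds ht)
  have hDP : A ⟨n, by omega⟩ t 0 0 * A ⟨n, by omega⟩ t 1 1
      - A ⟨n, by omega⟩ t 0 1 * A ⟨n, by omega⟩ t 1 0 = 0 := by
    have := hdet t ht ⟨n, by omega⟩; rwa [Matrix.det_fin_two] at this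
  have hDQ : A ⟨n + 1, by omega⟩ t 0 0 * A ⟨n + 1, by omega⟩ t 1 1
      - A ⟨n + 1, by omega⟩ t 0 1 * A ⟨n + 1, by omega⟩ t 1 0 = 0 := by
    have := hdet t ht ⟨n + 1, by omega⟩; rwa [Matrix.det_fin_two] at this
  have hSP := fun (k l : Fin 2) => hSch1 t ht i ⟨n, by omega⟩ hjP k l
  have hSQ := fun (k l : Fin 2) => hSch1 t ht i ⟨n + 1, by omega⟩ hjQ k l
  rw [extP] at hSP
  rw [extQ] at hSQ
  simp only [Matrix.smul_apply, Matrix.sub_apply, Matrix.mul_apply, Fin.sum_univ_two,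
    smul_eq_mul, sub_zero] at hSP hSQ
  simp only [Rhat, Matrix.smul_apply, Matrix.vecMulVec_apply, smul_eq_mul]
  fin_cases k <;> fin_cases l <;>
    simp only [Fin.zero_eta, Fin.mk_one, Fin.isValue, Matrix.cons_val_zero,
      Matrix.cons_val_one, Matrix.head_cons]
  · rw [pderiv_master i t (fun s => A ⟨n, by omega⟩ s 0 1) (fun s => A ⟨n, by omega⟩ s 1 1)
      (fun s => A ⟨n + 1, by omega⟩ s 0 1) (fun s => A ⟨n + 1, by omega⟩ s 1 1)
      (fun s => A ⟨n, by omega⟩ s 0 1) (fun s => -(A ⟨n + 1, by omega⟩ s 1 1))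
      (hd _ _ _) (hd _ _ _) (hd _ _ _) (hd _ _ _) (hd _ _ _) ((hd _ _ _).neg) hD,
      pderiv_neg']
    rw [hSP 0 1, hSP 1 1, hSQ 0 1, hSQ 1 1]
    simp only [Matrix.sub_apply, Matrix.smul_apply, Matrix.mul_apply, Fin.sum_univ_two,
      smul_eq_mul, Matrix.one_apply_eq, Matrix.sub_apply, Matrix.one_apply,
      if_neg (by decide : ¬((0:Fin 2) = 1)), if_neg (by decide : ¬((1:Fin 2) = 0))]
    set ai := A (inc n i) t 0 0
    set bi := A (inc n i) t 0 1
    set ci := A (inc n i) t 1 0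
    set di := A (inc n i) t 1 1
    set aP := A ⟨n, by omega⟩ t 0 0
    set bP := A ⟨n, by omega⟩ t 0 1
    set cP := A ⟨n, by omega⟩ t 1 0
    set dP := A ⟨n, by omega⟩ t 1 1
    set aQ := A ⟨n + 1, by omega⟩ t 0 0
    set bQ := A ⟨n + 1, by omega⟩ t 0 1
    set cQ := A ⟨n + 1, by omega⟩ t 1 0
    set dQ := A ⟨n + 1, by omega⟩ t 1 1
    set ti := t i
    simp only [Matrix.vecMulVec_apply, Matrix.cons_val_zero, Matrix.cons_val_one, Matrix.head_cons, if_true, ite_true]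
    field_simp
    try rw [eq_div_iff (by simp [mul_ne_zero_iff, hti0, hti1, hD, sub_ne_zero])]
    linear_combination (bi*bQ*dQ*ti - bi*bQ*dQ) * hDP + (-bi*bP*dP*ti) * hDQ
  · rw [pderiv_master i t (fun s => A ⟨n, by omega⟩ s 0 1) (fun s => A ⟨n, by omega⟩ s 1 1)
      (fun s => A ⟨n + 1, by omega⟩ s 0 1) (fun s => A ⟨n + 1, by omega⟩ s 1 1)
      (fun s => A ⟨n, by omega⟩ s 0 1) (fun s => A ⟨n + 1, by omega⟩ s 0 1)
      (hd _ _ _) (hd _ _ _) (hd _ _ _) (hd _ _ _) (hd _ _ _) (hd _ _ _) hD]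
    rw [hSP 0 1, hSP 1 1, hSQ 0 1, hSQ 1 1]
    simp only [Matrix.sub_apply, Matrix.smul_apply, Matrix.mul_apply, Fin.sum_univ_two,
      smul_eq_mul, Matrix.one_apply_eq, Matrix.sub_apply, Matrix.one_apply,
      if_neg (by decide : ¬((0:Fin 2) = 1)), if_neg (by decide : ¬((1:Fin 2) = 0))]
    set ai := A (inc n i) t 0 0
    set bi := A (inc n i) t 0 1
    set ci := A (inc n i) t 1 0
    set di := A (inc n i) t 1 1
    set aP := A ⟨n, by omega⟩ t 0 0
    set bP := A ⟨n, by omega⟩ t 0 1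
    set cP := A ⟨n, by omega⟩ t 1 0
    set dP := A ⟨n, by omega⟩ t 1 1
    set aQ := A ⟨n + 1, by omega⟩ t 0 0
    set bQ := A ⟨n + 1, by omega⟩ t 0 1
    set cQ := A ⟨n + 1, by omega⟩ t 1 0
    set dQ := A ⟨n + 1, by omega⟩ t 1 1
    set ti := t i
    simp only [Matrix.vecMulVec_apply, Matrix.cons_val_zero, Matrix.cons_val_one, Matrix.head_cons, if_true, ite_true]
    field_simp
    try rw [eq_div_iff (by simp [mul_ne_zero_iff, hti0, hti1, hD, sub_ne_zero])]
    linear_combination (-bi*bQ^2*ti + bi*bQ^2) * hDP + (bi*bP^2*ti) * hDQ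
  · rw [pderiv_master i t (fun s => A ⟨n, by omega⟩ s 0 1) (fun s => A ⟨n, by omega⟩ s 1 1)
      (fun s => A ⟨n + 1, by omega⟩ s 0 1) (fun s => A ⟨n + 1, by omega⟩ s 1 1)
      (fun s => A ⟨n, by omega⟩ s 1 1) (fun s => -(A ⟨n + 1, by omega⟩ s 1 1))
      (hd _ _ _) (hd _ _ _) (hd _ _ _) (hd _ _ _) (hd _ _ _) ((hd _ _ _).neg) hD,
      pderiv_neg']
    rw [hSP 0 1, hSP 1 1, hSQ 0 1, hSQ 1 1]
    simp only [Matrix.sub_apply, Matrix.smul_apply, Matrix.mul_apply, Fin.sum_univ_two,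
      smul_eq_mul, Matrix.one_apply_eq, Matrix.sub_apply, Matrix.one_apply,
      if_neg (by decide : ¬((0:Fin 2) = 1)), if_neg (by decide : ¬((1:Fin 2) = 0))]
    set ai := A (inc n i) t 0 0
    set bi := A (inc n i) t 0 1
    set ci := A (inc n i) t 1 0
    set di := A (inc n i) t 1 1
    set aP := A ⟨n, by omega⟩ t 0 0
    set bP := A ⟨n, by omega⟩ t 0 1
    set cP := A ⟨n, by omega⟩ t 1 0
    set dP := A ⟨n, by omega⟩ t 1 1
    set aQ := A ⟨n + 1, by omega⟩ t 0 0
    set bQ := A ⟨n + 1, by omega⟩ t 0 1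
    set cQ := A ⟨n + 1, by omega⟩ t 1 0
    set dQ := A ⟨n + 1, by omega⟩ t 1 1
    set ti := t i
    simp only [Matrix.vecMulVec_apply, Matrix.cons_val_zero, Matrix.cons_val_one, Matrix.head_cons, if_true, ite_true]
    field_simp
    try rw [eq_div_iff (by simp [mul_ne_zero_iff, hti0, hti1, hD, sub_ne_zero])]
    linear_combination (bi*dQ^2*ti - bi*dQ^2) * hDP + (-bi*dP^2*ti) * hDQ
  · rw [pderiv_master i t (fun s => A ⟨n, by omega⟩ s 0 1) (fun s => A ⟨n, by omega⟩ s 1 1)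
      (fun s => A ⟨n + 1, by omega⟩ s 0 1) (fun s => A ⟨n + 1, by omega⟩ s 1 1)
      (fun s => A ⟨n, by omega⟩ s 1 1) (fun s => A ⟨n + 1, by omega⟩ s 0 1)
      (hd _ _ _) (hd _ _ _) (hd _ _ _) (hd _ _ _) (hd _ _ _) (hd _ _ _) hD]
    rw [hSP 0 1, hSP 1 1, hSQ 0 1, hSQ 1 1]
    simp only [Matrix.sub_apply, Matrix.smul_apply, Matrix.mul_apply, Fin.sum_univ_two,
      smul_eq_mul, Matrix.one_apply_eq, Matrix.sub_apply, Matrix.one_apply,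
      if_neg (by decide : ¬((0:Fin 2) = 1)), if_neg (by decide : ¬((1:Fin 2) = 0))]
    set ai := A (inc n i) t 0 0
    set bi := A (inc n i) t 0 1
    set ci := A (inc n i) t 1 0
    set di := A (inc n i) t 1 1
    set aP := A ⟨n, by omega⟩ t 0 0
    set bP := A ⟨n, by omega⟩ t 0 1
    set cP := A ⟨n, by omega⟩ t 1 0
    set dP := A ⟨n, by omega⟩ t 1 1
    set aQ := A ⟨n + 1, by omega⟩ t 0 0
    set bQ := A ⟨n + 1, by omega⟩ t 0 1
    set cQ := A ⟨n + 1, by omega⟩ t 1 0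
    set dQ := A ⟨n + 1, by omega⟩ t 1 1
    set ti := t i
    simp only [Matrix.vecMulVec_apply, Matrix.cons_val_zero, Matrix.cons_val_one, Matrix.head_cons, if_true, ite_true]
    field_simp
    try rw [eq_div_iff (by simp [mul_ne_zero_iff, hti0, hti1, hD, sub_ne_zero])]
    linear_combination (-bi*bQ*dQ*ti + bi*bQ*dQ) * hDP + (bi*bP*dP*ti) * hDQ
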